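/- Chebyshev minimality of the monic Chebyshev polynomial: Let n ≥ 1 be an integer. For every real polynomial S with deg S ≤ n − 1, sup_{x∈[−1,1]} |x^n − S(x)| ≥ 2^{1−n}, and equality holds for S(x) = x^n − 2^{1−n} T_n(x). Thus x^n − 2^{1−n}T_n(x) is a best approximant of degree n − 1 to x^n on [−1,1] in the uniform norm. -/

import Mathlib

open Polynomial Polynomial.Chebyshev Real


lemma degT : ∀ m : ℕ, (T ℝ (m + 1) - C ((2:ℝ)^m) * X^(m+1)).degree < ((m + 1 : ℕ) : WithBot ℕ)
  | 0 => by
      simp [Polynomial.Chebyshev.T_one]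
  | 1 => by
      have h : T ℝ 2 = 2 * X ^ 2 - 1 := Polynomial.Chebyshev.T_two ℝ
      have h2 : ((1:ℕ):ℤ) + 1 = 2 := by norm_num
      rw [h2, h]
      have : (2 * X ^ 2 - 1 : ℝ[X]) - C ((2:ℝ)^1) * X^2 = -1 := by
        rw [pow_one, map_ofNat]; ring
      rw [this]
      rw [degree_neg]
      exact (degree_one_le).trans_lt (by norm_num)
  | (k+2) => by
      have ih2 := degT (k+1)
      have hrec := Polynomial.Chebyshev.T_add_two ℝ (k+1)
      have hidx : ((k+2:ℕ):ℤ) + 1 = ((k:ℤ)+1) + 2 := by push_cast; ring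
      have hidx2 : ((k:ℤ)+1) + 1 = ((k+1:ℕ):ℤ) + 1 := by push_cast; ring
      have hidx3 : ((k:ℤ)+1) = ((k:ℕ):ℤ) + 1 := by push_cast; ring
      rw [hidx, hrec, hidx2]
      have hC : C ((2:ℝ)^(k+2)) = 2 * C ((2:ℝ)^(k+1)) := by
        rw [pow_succ, mul_comm, Polynomial.C_mul, map_ofNat]
      have key : (2 * X * T ℝ ((k+1:ℕ) + 1) - T ℝ ((k:ℤ)+1)) - C ((2:ℝ)^(k+2)) * X^(k+2+1)
          = 2 * X * (T ℝ ((k+1:ℕ) + 1) - C ((2:ℝ)^(k+1)) * X^(k+1+1)) - T ℝ ((k:ℤ)+1) := by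
        rw [hC]; ring
      rw [key]
      have hTle : (T ℝ ((k:ℤ)+1)).degree ≤ ((k+1 : ℕ) : WithBot ℕ) := by
        have : T ℝ ((k:ℤ)+1) = (T ℝ ((k:ℕ)+1) - C ((2:ℝ)^k) * X^(k+1)) + C ((2:ℝ)^k) * X^(k+1) := by
          rw [hidx3]; ring
        rw [this]
        refine (degree_add_le _ _).trans (max_le ((degT k).le) ?_)
        rw [degree_C_mul (by positivity), degree_X_pow]
      refine (degree_sub_le _ _).trans_lt (max_lt ?_ (hTle.trans_lt (by norm_cast; omega)))
      have h2X : (2*X : ℝ[X]).degree = 1 := by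
        rw [show (2*X:ℝ[X]) = C 2 * X from by rw [map_ofNat], degree_C_mul two_ne_zero, degree_X]
      refine (degree_mul_le _ _).trans_lt ?_
      rw [h2X]
      calc (1 : WithBot ℕ) + _ < 1 + ((k+1+1:ℕ) : WithBot ℕ) :=
            WithBot.add_lt_add_left (by simp) ih2
        _ = ((k+2+1 : ℕ) : WithBot ℕ) := by norm_cast; omega

lemma degTle (m : ℕ) : (T ℝ (m + 1)).degree ≤ ((m + 1 : ℕ) : WithBot ℕ) := by
  have h : T ℝ ((m:ℕ)+1) = (T ℝ ((m:ℕ)+1) - C ((2:ℝ)^m) * X^(m+1)) + C ((2:ℝ)^m) * X^(m+1) := by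
    ring
  rw [h]
  refine (degree_add_le _ _).trans (max_le ((degT m).le) ?_)
  rw [degree_C_mul (by positivity), degree_X_pow]

-- |T_n(x)| ≤ 1 on [-1,1]
lemma absTle (n : ℤ) {x : ℝ} (hx : x ∈ Set.Icc (-1:ℝ) 1) : |(T ℝ n).eval x| ≤ 1 := by
  have h : x = Real.cos (Real.arccos x) := (Real.cos_arccos hx.1 hx.2).symm
  rw [h, Polynomial.Chebyshev.T_real_cos]
  exact Real.abs_cos_le_one _

lemma Teval1 (n : ℤ) : (T ℝ n).eval 1 = 1 := by
  have := Polynomial.Chebyshev.T_real_cos 0 n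
  simpa using this

/-- Chebyshev minimality of the monic Chebyshev polynomial: every polynomial S of
degree < n deviates from x^n by at least 2^{1-n} on [-1,1], and
S = x^n − 2^{1-n}·T_n achieves this bound. -/
theorem monic_chebyshev_minimality (n : ℕ) (hn : 1 ≤ n) :
    (∀ S : Polynomial ℝ, S.degree < n →
      (2 : ℝ) ^ ((1 : ℤ) - n) ≤ ⨆ x : Set.Icc (-1 : ℝ) 1, |x.1 ^ n - S.eval x.1|) ∧
    (⨆ x : Set.Icc (-1 : ℝ) 1,
        |x.1 ^ n - (X ^ n - C ((2 : ℝ) ^ ((1 : ℤ) - n)) * T ℝ n).eval x.1|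
      = (2 : ℝ) ^ ((1 : ℤ) - n)) := by
  obtain ⟨m, rfl⟩ : ∃ m, n = m + 1 := ⟨n - 1, (Nat.succ_pred_eq_of_pos hn).symm⟩
  set c : ℝ := (2 : ℝ) ^ ((1 : ℤ) - (m+1 : ℕ)) with hcdef
  have hc0 : 0 < c := by positivity
  have hc1 : c * 2 ^ m = 1 := by
    rw [hcdef, show ((1:ℤ) - ((m+1:ℕ):ℤ)) = -(m:ℤ) by push_cast; ring,
      zpow_neg, zpow_natCast]
    field_simp
  haveI : Nonempty (Set.Icc (-1:ℝ) 1) := ⟨⟨1, by norm_num, le_refl 1⟩⟩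
  constructor
  · intro S hS
    by_contra hM
    push_neg at hM
    set M := ⨆ x : Set.Icc (-1 : ℝ) 1, |x.1 ^ (m+1) - S.eval x.1| with hMdef
    -- boundedness of the sup
    have hbdd : BddAbove (Set.range fun x : Set.Icc (-1:ℝ) 1 => |x.1 ^ (m+1) - S.eval x.1|) := by
      have hc : ContinuousOn (fun x : ℝ => |x ^ (m+1) - S.eval x|) (Set.Icc (-1) 1) := by
        fun_prop
      have := (isCompact_Icc (a := (-1:ℝ)) (b := 1)).bddAbove_image hc
      rwa [Set.image_eq_range] at this
    have hle : ∀ x ∈ Set.Icc (-1:ℝ) 1, |x ^ (m+1) - S.eval x| ≤ M := fun x hx =>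
      le_ciSup hbdd (⟨x, hx⟩ : Set.Icc (-1:ℝ) 1)
    -- the alternation points
    set nn := m + 1 with hnn
    have hnpos : (0:ℝ) < nn := by positivity
    set xp : ℕ → ℝ := fun k => Real.cos (k * π / nn) with hxp
    have hxmem : ∀ k, xp k ∈ Set.Icc (-1:ℝ) 1 := fun k =>
      ⟨Real.neg_one_le_cos _, Real.cos_le_one _⟩
    have hTx : ∀ k ≤ nn, (T ℝ nn).eval (xp k) = (-1:ℝ)^k := by
      intro k hk
      show (T ℝ (nn:ℤ)).eval (Real.cos ((k:ℝ) * π / nn)) = (-1:ℝ)^k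
      rw [Polynomial.Chebyshev.T_real_cos]
      have harg : (((nn:ℕ):ℤ):ℝ) * ((k:ℝ) * π / nn) = k * π := by
        push_cast
        field_simp
      rw [harg]
      simpa using Real.cos_nat_mul_pi_sub 0 k
    have hxlt : ∀ j k, j < k → k ≤ nn → xp k < xp j := by
      intro j k hjk hk
      apply Real.cos_lt_cos_of_nonneg_of_le_pi
      · positivity
      · rw [div_le_iff₀ hnpos]
        calc (k:ℝ) * π ≤ nn * π := by
              have : (k:ℝ) ≤ nn := by exact_mod_cast hk
              nlinarith [Real.pi_pos]
          _ = π * nn := by ring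
      · have hj : (j:ℝ) < k := by exact_mod_cast hjk
        rw [div_lt_div_iff₀ hnpos hnpos]
        nlinarith [mul_pos (mul_pos (sub_pos.mpr hj) Real.pi_pos) hnpos]
    -- the difference polynomial
    set D : ℝ[X] := C c * T ℝ nn - (X ^ nn - S) with hDdef
    have hDeval : ∀ x : ℝ, D.eval x = c * (T ℝ nn).eval x - (x ^ nn - S.eval x) := by
      intro x; simp [hDdef]
    have hsign : ∀ k ≤ nn, 0 < (-1:ℝ)^k * D.eval (xp k) := by
      intro k hk
      have h1 := hle (xp k) (hxmem k)
      have h2 : D.eval (xp k) = c * (-1:ℝ)^k - (xp k ^ nn - S.eval (xp k)) := by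
        rw [hDeval, hTx k hk]
      rw [h2]
      have habs := abs_le.mp h1
      rcases Nat.even_or_odd k with he | ho
      · rw [he.neg_one_pow]; nlinarith
      · rw [ho.neg_one_pow]; nlinarith
    -- roots via IVT
    have hroot : ∀ k : Fin nn, ∃ t ∈ Set.Ioo (xp (k+1)) (xp k), D.eval t = 0 := by
      rintro ⟨k, hk⟩
      show ∃ t ∈ Set.Ioo (xp (k+1)) (xp k), D.eval t = 0
      have hlt : xp (k+1) < xp k := hxlt k (k+1) (by omega) (by omega)
      have hcont : ContinuousOn (fun t => D.eval t) (Set.Icc (xp (k+1)) (xp k)) :=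
        (Polynomial.continuous D).continuousOn
      have hk1 := hsign k (by omega)
      have hk2 := hsign (k+1) (by omega)
      rcases Nat.even_or_odd k with he | ho
      · have h1 : 0 < D.eval (xp k) := by
          rw [he.neg_one_pow] at hk1; linarith
        have h2 : D.eval (xp (k+1)) < 0 := by
          have : Odd (k+1) := he.add_one
          rw [this.neg_one_pow] at hk2; nlinarith
        have := intermediate_value_Ioo hlt.le hcont (a := xp (k+1)) (b := xp k)
          (Set.mem_Ioo.mpr ⟨h2, h1⟩)
        obtain ⟨t, ht, hteq⟩ := this
        exact ⟨t, ht, hteq⟩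
      · have h1 : D.eval (xp k) < 0 := by
          rw [ho.neg_one_pow] at hk1; nlinarith
        have h2 : 0 < D.eval (xp (k+1)) := by
          have : Even (k+1) := ho.add_one
          rw [this.neg_one_pow] at hk2; linarith
        have := intermediate_value_Ioo' hlt.le hcont (a := xp (k+1)) (b := xp k)
          (Set.mem_Ioo.mpr ⟨h1, h2⟩)
        obtain ⟨t, ht, hteq⟩ := this
        exact ⟨t, ht, hteq⟩
    choose t ht hteq using hroot
    have htinj : Function.Injective t := by
      have hanti : ∀ i j : Fin nn, i < j → t j < t i := by
        intro i j hij
        have h1 : t j < xp j := (ht j).2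
        have h2 : xp (i+1) < t i := (ht i).1
        have h3 : xp j.val ≤ xp (i.val+1) := by
          rcases eq_or_lt_of_le (show i.val + 1 ≤ j.val from hij) with he | hl
          · rw [he]
          · exact (hxlt (i.val+1) j.val hl (by omega)).le
        linarith
      intro i j hij
      by_contra hne
      rcases lt_or_gt_of_ne hne with h | h
      · exact absurd hij (hanti i j h).ne'
      · exact absurd hij (hanti j i h).ne
    -- D ≠ 0
    have hD1 : D.eval (xp 0) ≠ 0 := by
      have := hsign 0 (by omega)
      simp only [pow_zero, one_mul] at this
      linarith
    have hDne : D ≠ 0 := fun h => hD1 (by rw [h]; simp)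
    -- degree D < nn
    have hDdeg : D.degree < (nn : WithBot ℕ) := by
      have hCc : C c * C ((2:ℝ)^m) = 1 := by rw [← Polynomial.C_mul, hc1, C_1]
      have hD2 : D = C c * (T ℝ (m+1) - C ((2:ℝ)^m) * X^(m+1)) + S := by
        have hidx : ((m+1:ℕ):ℤ) = (m:ℤ)+1 := by push_cast; ring
        rw [hDdef, hnn, hidx]
        linear_combination (X:ℝ[X])^(m+1) * hCc
      rw [hD2]
      refine (degree_add_le _ _).trans_lt (max_lt ?_ ?_)
      · calc (C c * (T ℝ (m+1) - C ((2:ℝ)^m) * X^(m+1))).degree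
            = (T ℝ (m+1) - C ((2:ℝ)^m) * X^(m+1)).degree := degree_C_mul (ne_of_gt hc0)
          _ < _ := degT m
      · exact hS
    have hnatdeg : D.natDegree < nn := by
      rwa [← Polynomial.natDegree_lt_iff_degree_lt hDne] at hDdeg
    have : D = 0 := by
      apply Polynomial.eq_zero_of_natDegree_lt_card_of_eval_eq_zero D htinj hteq
      simpa using hnatdeg
    exact hDne this
  · -- part 2
    have heq : ∀ x : ℝ, x ^ (m+1) - (X ^ (m+1) - C c * T ℝ (m+1)).eval x
        = c * (T ℝ (m+1)).eval x := by
      intro x; simp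
    have hbd : ∀ x : Set.Icc (-1:ℝ) 1,
        |x.1 ^ (m+1) - (X ^ (m+1) - C c * T ℝ (m+1)).eval x.1| ≤ c := by
      intro x
      rw [heq, abs_mul, abs_of_pos hc0]
      calc c * |(T ℝ (m+1)).eval x.1| ≤ c * 1 := by
            have := absTle (m+1) x.2
            nlinarith
        _ = c := mul_one c
    apply le_antisymm
    · exact ciSup_le hbd
    · have hbdd : BddAbove (Set.range fun x : Set.Icc (-1:ℝ) 1 =>
          |x.1 ^ (m+1) - (X ^ (m+1) - C c * T ℝ (m+1)).eval x.1|) := ⟨c, by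
        rintro y ⟨x, rfl⟩; exact hbd x⟩
      have h1 : |(1:ℝ) ^ (m+1) - (X ^ (m+1) - C c * T ℝ (m+1)).eval 1| = c := by
        rw [heq, Teval1, mul_one, abs_of_pos hc0]
      calc c = |(1:ℝ) ^ (m+1) - (X ^ (m+1) - C c * T ℝ (m+1)).eval 1| := h1.symm
        _ ≤ _ := le_ciSup hbdd (⟨1, by norm_num, le_refl 1⟩ : Set.Icc (-1:ℝ) 1)
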